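/- Let d = (d_1,...,d_n) be a sequence of integers with d_i ≥ 2 for all i and d_i ≥ 3 for some i. Then the n×n symmetric matrix M with M_{ii} = -d_i, M_{i,i+1} = M_{i+1,i} = 1 (indices mod n, assuming n ≥ 3), and all other entries 0, is negative definite. -/

import Mathlib

/-- The intersection matrix of a cycle of curves with self-intersections `-d i`:
diagonal entries `-d i`, entries `1` between cyclically adjacent indices. -/
def cycleIntersectionMatrix (n : ℕ) [NeZero n] (d : Fin n → ℤ) : Matrix (Fin n) (Fin n) ℝ :=
  fun i j =>
    (if i = j then (-(d i : ℝ)) else 0) +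
    (if j = i + 1 then 1 else 0) + (if i = j + 1 then 1 else 0)

theorem cycle_intersection_matrix_negDef (n : ℕ) [NeZero n] (hn : 3 ≤ n) (d : Fin n → ℤ)
    (h2 : ∀ i, 2 ≤ d i) (h3 : ∃ i, 3 ≤ d i) :
    ∀ x : Fin n → ℝ, x ≠ 0 →
      dotProduct x ((cycleIntersectionMatrix n d).mulVec x) < 0 := by
  intro x hx
  have hmv : ∀ i : Fin n, (cycleIntersectionMatrix n d).mulVec x i
      = -(d i : ℝ) * x i + x (i + 1) + x (i - 1) := by
    intro i
    unfold cycleIntersectionMatrix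
    simp only [Matrix.mulVec, dotProduct, add_mul]
    rw [Finset.sum_add_distrib, Finset.sum_add_distrib]
    congr 1
    · congr 1
      · rw [Finset.sum_eq_single i]
        · simp [neg_mul]
        · intro j _ hj; simp [Ne.symm hj]
        · simp
      · rw [Finset.sum_eq_single (i + 1)]
        · simp
        · intro j _ hj; simp [hj]
        · simp
    · rw [Finset.sum_eq_single (i - 1)]
      · simp
      · intro j _ hj
        have : i ≠ j + 1 := by
          intro h; apply hj; rw [h]; simp
        simp [this]
      · simp
  -- reindexing lemmas
  have hre1 : ∑ i, x i * x (i - 1) = ∑ i, x i * x (i + 1) := by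
    refine Fintype.sum_equiv (Equiv.subRight (1 : Fin n)) _ _ fun i => ?_
    simp [Equiv.subRight, mul_comm]
  have hre2 : ∑ i, x (i + 1) ^ 2 = ∑ i, x i ^ 2 := by
    refine Fintype.sum_equiv (Equiv.addRight (1 : Fin n)) _ _ fun i => ?_
    simp [Equiv.addRight]
  have key : dotProduct x ((cycleIntersectionMatrix n d).mulVec x)
      = -(∑ i, ((d i : ℝ) - 2) * x i ^ 2) - ∑ i, (x i - x (i + 1)) ^ 2 := by
    unfold dotProduct
    simp only [hmv]
    have e1 : ∀ i : Fin n, x i * (-(d i : ℝ) * x i + x (i + 1) + x (i - 1))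
        = -((d i : ℝ) * x i ^ 2) + x i * x (i + 1) + x i * x (i - 1) := by
      intro i; ring
    have e2 : ∀ i : Fin n, ((d i : ℝ) - 2) * x i ^ 2
        = (d i : ℝ) * x i ^ 2 - 2 * x i ^ 2 := by intro i; ring
    have e3 : ∀ i : Fin n, (x i - x (i + 1)) ^ 2
        = x i ^ 2 + x (i + 1) ^ 2 - 2 * (x i * x (i + 1)) := by intro i; ring
    simp only [e1, e2, e3, Finset.sum_add_distrib, Finset.sum_sub_distrib,
      Finset.sum_neg_distrib, ← Finset.mul_sum]
    rw [hre1, hre2]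
    ring
  rw [key]
  have hTnn : ∀ i : Fin n, (0 : ℝ) ≤ ((d i : ℝ) - 2) * x i ^ 2 := by
    intro i
    have : (2 : ℝ) ≤ (d i : ℝ) := by exact_mod_cast h2 i
    exact mul_nonneg (by linarith) (sq_nonneg _)
  have hSnn : ∀ i : Fin n, (0 : ℝ) ≤ (x i - x (i + 1)) ^ 2 := fun i => sq_nonneg _
  by_contra hcon
  push_neg at hcon
  have hTs : (0 : ℝ) ≤ ∑ i, ((d i : ℝ) - 2) * x i ^ 2 :=
    Finset.sum_nonneg (fun i _ => hTnn i)
  have hSs : (0 : ℝ) ≤ ∑ i, (x i - x (i + 1)) ^ 2 :=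
    Finset.sum_nonneg (fun i _ => hSnn i)
  have hT0 : ∑ i, ((d i : ℝ) - 2) * x i ^ 2 = 0 := by linarith
  have hS0 : ∑ i, (x i - x (i + 1)) ^ 2 = 0 := by linarith
  have hstep : ∀ i : Fin n, x (i + 1) = x i := by
    intro i
    have := (Finset.sum_eq_zero_iff_of_nonneg (fun i _ => hSnn i)).mp hS0 i (Finset.mem_univ i)
    have h := pow_eq_zero_iff (n := 2) (by norm_num) |>.mp this
    linarith [sub_eq_zero.mp h]
  have hT : ∀ i : Fin n, ((d i : ℝ) - 2) * x i ^ 2 = 0 :=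
    fun i => (Finset.sum_eq_zero_iff_of_nonneg (fun i _ => hTnn i)).mp hT0 i (Finset.mem_univ i)
  obtain ⟨i₀, hi₀⟩ := h3
  have hx0 : x i₀ = 0 := by
    have hd : (3 : ℝ) ≤ (d i₀ : ℝ) := by exact_mod_cast hi₀
    have := hT i₀
    have hne : ((d i₀ : ℝ) - 2) ≠ 0 := by linarith
    have := (mul_eq_zero.mp this).resolve_left hne
    exact pow_eq_zero_iff (n := 2) (by norm_num) |>.mp this
  open Fin.NatCast in
  have hconst : ∀ (m : ℕ) (i : Fin n), x (i + (m : Fin n)) = x i := by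
    intro m
    induction m with
    | zero => simp
    | succ m ih =>
      intro i
      have : ((m + 1 : ℕ) : Fin n) = (m : Fin n) + 1 := by push_cast; ring
      rw [this, ← add_assoc, hstep, ih]
  apply hx
  funext j
  have : x j = x i₀ := by
    have := hconst (j - i₀).val i₀
    rwa [Fin.cast_val_eq_self, add_sub_cancel] at this
  simp [this, hx0]
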